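/- Let α ∈ (0,1), β ∈ (0,1], S > 0, σ_N² > 0, and suppose σ_ε² > τ(β) := (1-α)σ_N² / (β(2α + (1-α)β)). Then SNR_post = (α + (1-α)β)² S / (α² σ_ε² + (1-α)² σ_N²) satisfies SNR_post > SNR_int = S / σ_ε². -/
import Mathlib


theorem snr_improvement (α β S σε2 σN2 : ℝ)
    (hα : α ∈ Set.Ioo (0:ℝ) 1) (hβ : β ∈ Set.Ioc (0:ℝ) 1)
    (hS : 0 < S) (hσN : 0 < σN2)
    (hσε : (1-α) * σN2 / (β * (2*α + (1-α)*β)) < σε2) :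
    S / σε2 < (α + (1-α)*β)^2 * S / (α^2 * σε2 + (1-α)^2 * σN2) := by
  obtain ⟨ha0, ha1⟩ := hα
  obtain ⟨hb0, hb1⟩ := hβ
  have h1a : 0 < 1 - α := by linarith
  have hden : 0 < β * (2*α + (1-α)*β) := by positivity
  have key : (1-α) * σN2 < (β * (2*α + (1-α)*β)) * σε2 := by
    have := (div_lt_iff₀ hden).mp hσε
    linarith
  have hσε0 : 0 < σε2 := by nlinarith [mul_pos h1a hσN]
  have hd2 : 0 < α^2 * σε2 + (1-α)^2 * σN2 := by positivity
  rw [div_lt_div_iff₀ hσε0 hd2]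
  nlinarith [mul_lt_mul_of_pos_left (mul_lt_mul_of_pos_left key h1a) hS]
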